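/- Let G, G̃ be real symmetric (n+1)×(n+1) matrices with eigenvalues λ₀ < 0 < λ₁ ≤ ... and λ̃₀ < 0 < λ̃₁ ≤ ..., such that λ₁ ≥ δ and λ̃₀ ≤ −δ for some δ > 0. Let p₀ and p̃₀ be unit eigenvectors for λ₀ and λ̃₀ respectively, with p̃₀·p₀ ≥ 0. Then |p̃₀ − p₀| ≤ |G̃ − G| / (δ√2). -/

import Mathlib

open Matrix
open scoped RealInnerProductSpace

/-- The operator norm of a real matrix, acting on Euclidean space. -/
noncomputable def matOpNorm {m : ℕ} (A : Matrix (Fin m) (Fin m) ℝ) : ℝ :=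
  ‖Matrix.toEuclideanCLM (𝕜 := ℝ) A‖

/-- The action of a matrix on Euclidean space. -/
noncomputable def matAct {m : ℕ} (A : Matrix (Fin m) (Fin m) ℝ)
    (v : EuclideanSpace ℝ (Fin m)) : EuclideanSpace ℝ (Fin m) :=
  Matrix.toEuclideanCLM (𝕜 := ℝ) A v

set_option maxHeartbeats 1000000 in
/-- If `G` has an orthonormal eigenbasis with increasingly ordered
eigenvalues `μ 0 < 0 < δ ≤ μ 1 ≤ ...`, and `G'` has a unit eigenvector `p₀'` with
eigenvalue `≤ −δ`, normalized so that `p₀'·p₀ ≥ 0`, then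
`|p₀' − p₀| ≤ |G' − G| / (δ √2)`. -/
theorem eigenvector_stability (n : ℕ) (hn : 1 ≤ n) (δ : ℝ) (hδ : 0 < δ)
    (G G' : Matrix (Fin (n + 1)) (Fin (n + 1)) ℝ)
    (hG : G.IsHermitian) (hG' : G'.IsHermitian)
    (p : Fin (n + 1) → EuclideanSpace ℝ (Fin (n + 1))) (μ : Fin (n + 1) → ℝ)
    (hp : Orthonormal ℝ p) (heig : ∀ i, matAct G (p i) = μ i • p i)
    (hmono : Monotone μ) (hμ0 : μ 0 < 0) (hμ1 : δ ≤ μ 1)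
    (p₀' : EuclideanSpace ℝ (Fin (n + 1))) (μ₀' : ℝ)
    (hp₀' : ‖p₀'‖ = 1) (heig' : matAct G' p₀' = μ₀' • p₀') (hμ₀' : μ₀' ≤ -δ)
    (hdot : 0 ≤ ⟪p₀', p 0⟫) :
    ‖p₀' - p 0‖ ≤ matOpNorm (G' - G) / (δ * Real.sqrt 2) := by
  -- the orthonormal basis
  have hcard : Fintype.card (Fin (n + 1)) =
      Module.finrank ℝ (EuclideanSpace ℝ (Fin (n + 1))) := by
    simp [finrank_euclideanSpace]
  set bb := basisOfOrthonormalOfCardEqFinrank hp hcard with hbb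
  have hbbcoe : ⇑bb = p := coe_basisOfOrthonormalOfCardEqFinrank hp hcard
  have hbon : Orthonormal ℝ ⇑bb := by rwa [hbbcoe]
  set b : OrthonormalBasis (Fin (n + 1)) ℝ (EuclideanSpace ℝ (Fin (n + 1))) :=
    bb.toOrthonormalBasis hbon with hb
  have hbcoe : ∀ i, b i = p i := by
    intro i
    rw [hb, Module.Basis.coe_toOrthonormalBasis, hbbcoe]
  -- coefficients
  set c : Fin (n + 1) → ℝ := fun i => ⟪p i, p₀'⟫ with hc
  have hsum1 : ∑ i, c i ^ 2 = 1 := by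
    have := b.sum_inner_mul_inner p₀' p₀'
    simp only [hbcoe] at this
    have h2 : ⟪p₀', p₀'⟫ = 1 := by
      rw [real_inner_self_eq_norm_sq, hp₀']; norm_num
    rw [h2] at this
    rw [← this]
    apply Finset.sum_congr rfl
    intro i _
    rw [hc, real_inner_comm (p i) p₀']
    ring
  -- the residual vector
  set r : EuclideanSpace ℝ (Fin (n + 1)) := matAct (G' - G) p₀' with hrdef
  have hGsym : (Matrix.toEuclideanLin G).IsSymmetric :=
    Matrix.isHermitian_iff_isSymmetric.mp hG
  have hmatActG : ∀ v, matAct G v = Matrix.toEuclideanLin G v := by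
    intro v
    rw [matAct, ← Matrix.coe_toEuclideanCLM_eq_toEuclideanLin]
    rfl
  have hr : r = μ₀' • p₀' - matAct G p₀' := by
    have hsub : matAct (G' - G) p₀' = matAct G' p₀' - matAct G p₀' := by
      simp only [matAct, map_sub, ContinuousLinearMap.sub_apply]
    rw [hrdef, hsub, heig']
  have hinner : ∀ i, ⟪p i, r⟫ = (μ₀' - μ i) * c i := by
    intro i
    rw [hr, inner_sub_right, real_inner_smul_right]
    have : ⟪p i, matAct G p₀'⟫ = μ i * c i := by
      rw [hmatActG, ← hGsym (p i) p₀', ← hmatActG, heig i, real_inner_smul_left]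
    rw [this, hc]
    ring
  have hnormr : ‖r‖ ^ 2 = ∑ i, ((μ₀' - μ i) * c i) ^ 2 := by
    have := b.sum_inner_mul_inner r r
    simp only [hbcoe] at this
    have h2 : ⟪r, r⟫ = ‖r‖ ^ 2 := real_inner_self_eq_norm_sq r
    rw [h2] at this
    rw [← this]
    apply Finset.sum_congr rfl
    intro i _
    rw [real_inner_comm (p i) r, hinner i]
    ring
  -- lower bound the residual norm
  have hterm : ∀ i ∈ Finset.univ.erase (0 : Fin (n + 1)),
      (2 * δ) ^ 2 * c i ^ 2 ≤ ((μ₀' - μ i) * c i) ^ 2 := by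
    intro i hi
    have hi0 : i ≠ 0 := Finset.ne_of_mem_erase hi
    have h1i : (1 : Fin (n + 1)) ≤ i := by
      rw [Fin.le_def]
      have : (1 : Fin (n + 1)).val = 1 := by
        rw [Fin.val_one']
        exact Nat.mod_eq_of_lt (by omega)
      rw [this]
      have := Fin.pos_of_ne_zero hi0
      omega
    have hμi : δ ≤ μ i := le_trans hμ1 (hmono h1i)
    have h2δ : 2 * δ ≤ μ i - μ₀' := by linarith
    have h4 : (2 * δ) ^ 2 ≤ (μ₀' - μ i) ^ 2 := by
      nlinarith [mul_nonneg (by linarith : (0:ℝ) ≤ μ i - μ₀' - 2 * δ)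
        (by linarith : (0:ℝ) ≤ μ i - μ₀' - 2 * δ), hδ.le, h2δ]
    calc (2 * δ) ^ 2 * c i ^ 2 ≤ (μ₀' - μ i) ^ 2 * c i ^ 2 :=
          mul_le_mul_of_nonneg_right h4 (sq_nonneg _)
      _ = ((μ₀' - μ i) * c i) ^ 2 := (mul_pow _ _ _).symm
  have hsum_erase : ∑ i ∈ Finset.univ.erase (0 : Fin (n + 1)), c i ^ 2 = 1 - c 0 ^ 2 := by
    have h := Finset.add_sum_erase Finset.univ (fun i => c i ^ 2)
      (Finset.mem_univ (0 : Fin (n + 1)))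
    rw [hsum1] at h
    have h2 : c 0 ^ 2 + ∑ i ∈ Finset.univ.erase (0 : Fin (n + 1)), c i ^ 2 = 1 := h
    linarith
  have hlow : (2 * δ) ^ 2 * (1 - c 0 ^ 2) ≤ ‖r‖ ^ 2 := by
    calc (2 * δ) ^ 2 * (1 - c 0 ^ 2)
        = ∑ i ∈ Finset.univ.erase (0 : Fin (n + 1)), (2 * δ) ^ 2 * c i ^ 2 := by
          rw [← Finset.mul_sum, hsum_erase]
      _ ≤ ∑ i ∈ Finset.univ.erase (0 : Fin (n + 1)), ((μ₀' - μ i) * c i) ^ 2 :=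
          Finset.sum_le_sum hterm
      _ ≤ ∑ i, ((μ₀' - μ i) * c i) ^ 2 := by
          apply Finset.sum_le_sum_of_subset_of_nonneg (Finset.erase_subset _ _)
          intro i _ _
          positivity
      _ = ‖r‖ ^ 2 := hnormr.symm
  -- upper bound the residual norm
  have hup : ‖r‖ ≤ matOpNorm (G' - G) := by
    rw [hrdef, matAct, matOpNorm]
    simpa [hp₀'] using (Matrix.toEuclideanCLM (𝕜 := ℝ) (G' - G)).le_opNorm p₀'
  -- facts about c 0
  have hc0 : 0 ≤ c 0 := by
    show (0:ℝ) ≤ ⟪p 0, p₀'⟫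
    rwa [real_inner_comm]
  have hc0le : c 0 ≤ 1 := by
    have h := abs_real_inner_le_norm (p 0) p₀'
    have hp0 : ‖p 0‖ = 1 := hp.1 0
    rw [hp0, hp₀', mul_one] at h
    calc c 0 ≤ |c 0| := le_abs_self _
      _ ≤ 1 := h
  have hnd : ‖p₀' - p 0‖ ^ 2 = 2 - 2 * c 0 := by
    rw [norm_sub_sq_real, hp₀']
    have hp0 : ‖p 0‖ = 1 := hp.1 0
    rw [hp0]
    have : ⟪p₀', p 0⟫ = c 0 := by rw [hc, real_inner_comm]
    rw [this]; ring
  -- finish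
  have hδ2 : 0 < δ * Real.sqrt 2 := by positivity
  rw [le_div_iff₀ hδ2]
  have hM0 : 0 ≤ matOpNorm (G' - G) := le_trans (norm_nonneg r) hup
  have hsq2 : Real.sqrt 2 ^ 2 = 2 := Real.sq_sqrt (by norm_num)
  have hsq : (‖p₀' - p 0‖ * (δ * Real.sqrt 2)) ^ 2 ≤ matOpNorm (G' - G) ^ 2 := by
    have h1 : (‖p₀' - p 0‖ * (δ * Real.sqrt 2)) ^ 2
        = (2 - 2 * c 0) * (δ ^ 2 * 2) := by
      rw [mul_pow, mul_pow, hsq2, hnd]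
    rw [h1]
    have h2 : ‖r‖ ^ 2 ≤ matOpNorm (G' - G) ^ 2 := by
      apply pow_le_pow_left₀ (norm_nonneg r) hup
    nlinarith [hlow, sq_nonneg (c 0)]
  nlinarith [mul_nonneg (norm_nonneg (p₀' - p 0)) hδ2.le, hM0]
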